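/- Let P₁ and P₂ be binary relations on a type α, let P be their composition (P a b ↔ ∃ c, P₁ a c ∧ P₂ c b), let L = Relation.TransGen P, and define S a b ↔ ∃ c d, P₂ a c ∧ L c d ∧ P₁ d b. Then S is transitive and Relation.TransGen S = S. (Accelerating any conjugate π₂ :: accel(π) :: π₁ of a cycle π = π₁ :: π₂ followed by its acceleration is pointless, since the composed relation equals its own transitive closure.) -/

import Mathlib

theorem stmt_6 {α : Type*} (P₁ P₂ : α → α → Prop)
    (P : α → α → Prop) (hP : ∀ a b, P a b ↔ ∃ c, P₁ a c ∧ P₂ c b)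
    (L : α → α → Prop) (hL : L = Relation.TransGen P)
    (S : α → α → Prop)
    (hS : ∀ a b, S a b ↔ ∃ c d, P₂ a c ∧ L c d ∧ P₁ d b) :
    Transitive S ∧ Relation.TransGen S = S := by
  have htrans : Transitive S := by
    intro a b c hab hbc
    obtain ⟨x, y, hax, hxy, hyb⟩ := (hS a b).mp hab
    obtain ⟨u, v, hbu, huv, hvc⟩ := (hS b c).mp hbc
    refine (hS a c).mpr ⟨x, v, hax, ?_, hvc⟩
    subst hL
    exact hxy.trans (Relation.TransGen.head ((hP y u).mpr ⟨b, hyb, hbu⟩) huv)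
  exact ⟨htrans, @Relation.transGen_eq_self _ _ ⟨htrans⟩⟩
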